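/- Let A be a unital C*-algebra, let a ∈ A, and let u ∈ A be a unitary. Then dist(a, GL(A)) ≤ r(u·a); consequently dist(a, GL(A)) ≤ inf over unitaries u of r(u·a). -/

import Mathlib

open scoped ENNReal NNReal

lemma aux_infEdist_le_spectralRadius
    (A : Type*) [NormedRing A] [StarRing A] [CStarRing A] [CompleteSpace A]
    [NormedAlgebra ℂ A] [StarModule ℂ A] (a : A) (u : unitary A) :
    EMetric.infEdist a {x : A | IsUnit x} ≤ spectralRadius ℂ ((u : A) * a) := by
  rcases subsingleton_or_nontrivial A with hA | hA
  · have ha : a ∈ {x : A | IsUnit x} := by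
      simp only [Set.mem_setOf_eq]
      exact isUnit_of_subsingleton a
    exact le_trans (le_of_eq (EMetric.infEdist_zero_of_mem ha)) zero_le
  · apply le_of_forall_gt_imp_ge_of_dense
    intro c hc
    obtain ⟨r, hr1, hr2⟩ := ENNReal.lt_iff_exists_nnreal_btwn.mp hc
    have hres : ((r : ℝ≥0) : ℂ) ∈ resolventSet ℂ ((u : A) * a) :=
      spectrum.mem_resolventSet_of_spectralRadius_lt (by
        rwa [show ‖((r : ℝ≥0) : ℂ)‖₊ = r by simp])
    have hunit : IsUnit (algebraMap ℂ A (r : ℂ) - (u : A) * a) := hres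
    -- the element x = (r : ℂ) • star u - a is invertible
    have hsu : IsUnit (star (u : A)) := (Unitary.toUnits u)⁻¹.isUnit
    have hx : IsUnit (star (u : A) * (algebraMap ℂ A (r : ℂ) - (u : A) * a)) :=
      hsu.mul hunit
    have hxe : star (u : A) * (algebraMap ℂ A (r : ℂ) - (u : A) * a)
        = (r : ℂ) • star (u : A) - a := by
      rw [mul_sub, ← mul_assoc, Unitary.coe_star_mul_self, one_mul,
        Algebra.algebraMap_eq_smul_one, mul_smul_comm, mul_one]
    rw [hxe] at hx
    have hx' : IsUnit (a - (r : ℂ) • star (u : A)) := by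
      have := hx.neg
      rwa [neg_sub] at this
    calc EMetric.infEdist a {x : A | IsUnit x}
        ≤ edist a (a - (r : ℂ) • star (u : A)) := EMetric.infEdist_le_edist_of_mem hx'
      _ = (‖(r : ℂ) • star (u : A)‖₊ : ℝ≥0∞) := by
          rw [edist_eq_enorm_sub, sub_sub_cancel, enorm_eq_nnnorm]
      _ = (r : ℝ≥0∞) := by
          have : ‖(r : ℂ) • star (u : A)‖ = (r : ℝ) := by
            rw [norm_smul, norm_star, CStarRing.norm_coe_unitary u]
            simp
          rw [← ENNReal.coe_inj.mpr (by ext; simpa [coe_nnnorm] using this :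
            ‖(r : ℂ) • star (u : A)‖₊ = r)]
      _ ≤ c := hr2.le

/-- In a unital C*-algebra, for every unitary `u` the distance from `a` to the invertibles
is at most the spectral radius `r(u a)`; consequently it is at most the infimum of
`r(u a)` over unitaries `u`. -/
theorem infEdist_invertibles_le_spectralRadius_unitary_mul
    (A : Type*) [NormedRing A] [StarRing A] [CStarRing A] [CompleteSpace A]
    [NormedAlgebra ℂ A] [StarModule ℂ A] (a : A) (u : unitary A) :
    EMetric.infEdist a {x : A | IsUnit x} ≤ spectralRadius ℂ ((u : A) * a) ∧
    EMetric.infEdist a {x : A | IsUnit x}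
      ≤ ⨅ (w : unitary A), spectralRadius ℂ ((w : A) * a) := by
  exact ⟨aux_infEdist_le_spectralRadius A a u,
    le_iInf fun w => aux_infEdist_le_spectralRadius A a w⟩
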